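/- Under the hypotheses of the deterministic continuous consensus model (weights summing to one, independent of target index), the diameter $\mathcal{D}(\mathcal{X}_t) := \max_{1 \le i,j \le N} |X^i_t - X^j_t|$ decays exponentially: $\mathcal{D}(\mathcal{X}_t) \le e^{-\lambda t} \mathcal{D}(\mathcal{X}_0)$ for all $t \ge 0$. -/

import Mathlib

open Real

theorem stmt_1 (N d : ℕ) (hN : 0 < N) (lam : ℝ) (hlam : 0 < lam)
    (psi : ℝ → Fin N → ℝ)
    (hpsi_nonneg : ∀ t ≥ (0 : ℝ), ∀ k, 0 ≤ psi t k)
    (hpsi_sum : ∀ t ≥ (0 : ℝ), ∑ k, psi t k = 1)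
    (X : Fin N → ℝ → EuclideanSpace ℝ (Fin d))
    (hODE : ∀ i, ∀ t ≥ (0 : ℝ),
      HasDerivAt (X i) (lam • ∑ k, psi t k • (X k t - X i t)) t) :
    ∀ t ≥ (0 : ℝ),
      (⨆ i, ⨆ j, ‖X i t - X j t‖) ≤
        Real.exp (-lam * t) * ⨆ i, ⨆ j, ‖X i 0 - X j 0‖ := by
  intro t ht
  have hNE : Nonempty (Fin N) := Fin.pos_iff_nonempty.mp hN
  have key : ∀ i j : Fin N, ‖X i t - X j t‖ = Real.exp (-lam * t) * ‖X i 0 - X j 0‖ := by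
    intro i j
    set f : ℝ → EuclideanSpace ℝ (Fin d) :=
      fun s => Real.exp (lam * s) • (X i s - X j s) with hf
    have hderiv : ∀ s ≥ (0 : ℝ), HasDerivAt f 0 s := by
      intro s hs
      have he : HasDerivAt (fun s => Real.exp (lam * s)) (Real.exp (lam * s) * lam) s := by
        have h1 : HasDerivAt (fun s : ℝ => lam * s) lam s := by
          simpa [mul_comm] using (hasDerivAt_id s).const_mul lam
        exact h1.exp
      have hsum : (∑ k, psi s k • (X k s - X i s)) - (∑ k, psi s k • (X k s - X j s))
          = X j s - X i s := by
        rw [← Finset.sum_sub_distrib]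
        have hterm : ∀ k ∈ Finset.univ,
            psi s k • (X k s - X i s) - psi s k • (X k s - X j s)
              = psi s k • (X j s - X i s) := by
          intro k _
          rw [← smul_sub]
          congr 1
          abel
        rw [Finset.sum_congr rfl hterm, ← Finset.sum_smul, hpsi_sum s hs, one_smul]
      have hD : HasDerivAt (fun s => X i s - X j s) (lam • (X j s - X i s)) s := by
        have h2 := (hODE i s hs).sub (hODE j s hs)
        rw [← smul_sub, hsum] at h2
        exact h2
      have h3 := he.smul hD
      have h4 : rexp (lam * s) • lam • (X j s - X i s) + (rexp (lam * s) * lam) • (X i s - X j s)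
          = (0 : EuclideanSpace ℝ (Fin d)) := by
        simp only [smul_smul]
        rw [← smul_add, sub_add_sub_cancel, sub_self, smul_zero]
      rw [h4] at h3
      exact h3
    have hconst : f t = f 0 := by
      have hcont : ContinuousOn f (Set.Icc 0 t) := fun x hx =>
        ((hderiv x hx.1).continuousAt).continuousWithinAt
      have hd : ∀ x ∈ Set.Ico (0 : ℝ) t, HasDerivWithinAt f 0 (Set.Ici x) x := fun x hx =>
        (hderiv x hx.1).hasDerivWithinAt
      exact constant_of_has_deriv_right_zero hcont hd t ⟨ht, le_refl t⟩
    have hnorm : Real.exp (lam * t) * ‖X i t - X j t‖ = ‖X i 0 - X j 0‖ := by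
      have := congrArg norm hconst
      simpa [hf, norm_smul, Real.abs_exp, mul_zero, Real.exp_zero] using this
    rw [neg_mul, Real.exp_neg, ← hnorm]
    exact (inv_mul_cancel_left₀ (Real.exp_ne_zero _) _).symm
  apply ciSup_le
  intro i
  apply ciSup_le
  intro j
  rw [key i j]
  have h1 : ‖X i 0 - X j 0‖ ≤ ⨆ j, ‖X i 0 - X j 0‖ :=
    le_ciSup (f := fun j => ‖X i 0 - X j 0‖) (Finite.bddAbove_range _) j
  have h2 : (⨆ j, ‖X i 0 - X j 0‖) ≤ ⨆ i, ⨆ j, ‖X i 0 - X j 0‖ :=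
    le_ciSup (f := fun i => ⨆ j, ‖X i 0 - X j 0‖) (Finite.bddAbove_range _) i
  exact mul_le_mul_of_nonneg_left (h1.trans h2) (Real.exp_nonneg _)
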